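/- Let I be a finite nonempty index set and let q, t : I → ℝ be probability mass functions (q i ≥ 0, t i ≥ 0 for all i, and Σ_{i∈I} q i = Σ_{i∈I} t i = 1). Define Sp(β) = Σ_{i∈I} max(0, β·q i − t i) for β ∈ ℝ, and let β* be the unique real number with Sp(β*) = 1. Then β* = 2 if and only if 2·q i − t i ≥ 0 for all i ∈ I. -/
import Mathlib


open Real Finset

/-- Characterization of `β* = 2` in Theorem 1: for `β*` the unique real with
`Sp(β*) = Σ max(0, β*·q i − t i) = 1`, one has `β* = 2` iff `2·q i − t i ≥ 0`
for all `i`. -/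
theorem beta_eq_two_iff {I : Type*} [Fintype I] [Nonempty I]
    (q t : I → ℝ) (hq : ∀ i, 0 ≤ q i) (ht : ∀ i, 0 ≤ t i)
    (hqs : ∑ i, q i = 1) (hts : ∑ i, t i = 1)
    (Sp : ℝ → ℝ) (hSp : ∀ β : ℝ, Sp β = ∑ i, max 0 (β * q i - t i))
    (βstar : ℝ) (hβ : Sp βstar = 1) :
    βstar = 2 ↔ ∀ i, 0 ≤ 2 * q i - t i := by
  have hsum2 : ∑ i, (2 * q i - t i) = 1 := by
    rw [Finset.sum_sub_distrib, ← Finset.mul_sum, hqs, hts]; ring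
  have hle : βstar - 1 ≤ Sp βstar := by
    rw [hSp]
    calc βstar - 1 = ∑ i, (βstar * q i - t i) := by
          rw [Finset.sum_sub_distrib, ← Finset.mul_sum, hqs, hts]; ring
        _ ≤ ∑ i, max 0 (βstar * q i - t i) :=
          Finset.sum_le_sum fun i _ => le_max_right _ _
  have hb2 : βstar ≤ 2 := by rw [hβ] at hle; linarith
  constructor
  · intro h2 i
    subst h2
    rw [hSp] at hβ
    have heq := (Finset.sum_eq_sum_iff_of_le
      (fun i (_ : i ∈ Finset.univ) => le_max_right 0 (2 * q i - t i))).mp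
      (hsum2.trans hβ.symm)
    have := heq i (Finset.mem_univ i)
    rw [this]
    exact le_max_left _ _
  · intro h
    by_contra hne
    have hlt : βstar < 2 := lt_of_le_of_ne hb2 hne
    rw [hSp] at hβ
    have hptle : ∀ i ∈ Finset.univ, max 0 (βstar * q i - t i) ≤ 2 * q i - t i := by
      intro i _
      rcases le_or_gt (βstar * q i - t i) 0 with h0 | h0
      · rw [max_eq_left h0]; exact h i
      · rw [max_eq_right h0.le]; nlinarith [hq i]
    have heq := (Finset.sum_eq_sum_iff_of_le hptle).mp (hβ.trans hsum2.symm)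
    have hex : ∃ j ∈ Finset.univ, (0:ℝ) < max 0 (βstar * q j - t j) := by
      by_contra hc
      push_neg at hc
      have : ∑ i, max 0 (βstar * q i - t i) ≤ 0 :=
        Finset.sum_nonpos fun i hi => hc i hi
      linarith
    obtain ⟨j, _, hj⟩ := hex
    have hjpos : 0 < βstar * q j - t j := by
      by_contra hc; push_neg at hc; rw [max_eq_left hc] at hj; exact lt_irrefl _ hj
    have hje : max 0 (βstar * q j - t j) = 2 * q j - t j := heq j (Finset.mem_univ j)
    rw [max_eq_right hjpos.le] at hje
    have hqj : q j = 0 := by nlinarith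
    nlinarith [ht j]
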